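/- Let 0 < d, let X and Y be independent random variables each uniformly distributed on [0,s], and let r₁, r₂ ∈ [0,1] satisfy 2d ≤ s(1 − r₁ + r₂) and 2d ≤ s(1 + r₁ − r₂). Then the aggregate position R_total = (1−r₁+r₂)X + (1+r₁−r₂)Y − 2d satisfies P(R_total ≤ 0) ≥ P(X + Y − 2d ≤ 0), with equality if and only if r₁ = r₂. (Theorem 3.4.) -/

import Mathlib

open MeasureTheory ProbabilityTheory Set

/-- The uniform probability distribution on the interval `[0, s]`. -/
noncomputable def uniformOnIcc (s : ℝ) : Measure ℝ :=
  (ENNReal.ofReal s)⁻¹ • (volume.restrict (Icc (0 : ℝ) s))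

lemma triangle_prob
    {Ω : Type*} [MeasurableSpace Ω] (P : Measure Ω) [IsProbabilityMeasure P]
    (s d a b : ℝ) (hd : 0 < d) (hs : 0 < s) (ha : 0 < a) (hb : 0 < b)
    (h1 : 2 * d ≤ s * a) (h2 : 2 * d ≤ s * b)
    (X Y : Ω → ℝ) (hXm : Measurable X) (hYm : Measurable Y)
    (hX : P.map X = uniformOnIcc s) (hY : P.map Y = uniformOnIcc s)
    (hXY : IndepFun X Y P) :
    P {ω | a * X ω + b * Y ω - 2 * d ≤ 0}
      = ENNReal.ofReal (2 * d ^ 2 / (a * b * s ^ 2)) := by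
  have hmap : P.map (fun ω => (X ω, Y ω)) = (uniformOnIcc s).prod (uniformOnIcc s) := by
    rw [(indepFun_iff_map_prod_eq_prod_map_map hXm.aemeasurable hYm.aemeasurable).mp hXY,
      hX, hY]
  have hSm : MeasurableSet {p : ℝ × ℝ | a * p.1 + b * p.2 - 2 * d ≤ 0} := by
    apply measurableSet_le _ measurable_const
    fun_prop
  have hPeq : P {ω | a * X ω + b * Y ω - 2 * d ≤ 0}
      = ((uniformOnIcc s).prod (uniformOnIcc s)) {p : ℝ × ℝ | a * p.1 + b * p.2 - 2 * d ≤ 0} := by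
    rw [← hmap, Measure.map_apply (hXm.prodMk hYm) hSm]
    rfl
  have hcne : (ENNReal.ofReal s)⁻¹ ≠ ⊤ := by
    simp [ENNReal.inv_ne_top, ENNReal.ofReal_pos, hs]
  have hda : 0 ≤ 2 * d / a := by positivity
  have hdas : 2 * d / a ≤ s := by rw [div_le_iff₀ ha]; linarith [h1]
  have hslice : ∀ x : ℝ, (volume.restrict (Icc (0 : ℝ) s))
        (Prod.mk x ⁻¹' {p : ℝ × ℝ | a * p.1 + b * p.2 - 2 * d ≤ 0})
      = ENNReal.ofReal (min ((2 * d - a * x) / b) s) := by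
    intro x
    have h1' : Prod.mk x ⁻¹' {p : ℝ × ℝ | a * p.1 + b * p.2 - 2 * d ≤ 0}
        = Iic ((2 * d - a * x) / b) := by
      ext y
      simp only [mem_preimage, mem_setOf_eq, mem_Iic, le_div_iff₀ hb]
      constructor <;> intro h <;> nlinarith
    have h2' : Iic ((2 * d - a * x) / b) ∩ Icc 0 s
        = Icc 0 (min ((2 * d - a * x) / b) s) := by
      ext y
      simp only [mem_inter_iff, mem_Iic, mem_Icc, le_min_iff]
      tauto
    rw [h1', Measure.restrict_apply measurableSet_Iic, h2', Real.volume_Icc, sub_zero]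
  have hI1 : ∫⁻ x in Icc (0 : ℝ) (2 * d / a), ENNReal.ofReal ((2 * d - a * x) / b)
      = ENNReal.ofReal (2 * d ^ 2 / (a * b)) := by
    rw [← ofReal_integral_eq_lintegral_ofReal
      (Continuous.integrableOn_Icc (by continuity))
      (by filter_upwards [self_mem_ae_restrict measurableSet_Icc] with x hx
          have : a * x ≤ 2 * d := by rw [← le_div_iff₀' ha]; exact hx.2
          exact div_nonneg (by linarith) hb.le)]
    congr 1
    rw [integral_Icc_eq_integral_Ioc, ← intervalIntegral.integral_of_le hda]
    have hrw : (fun x : ℝ => (2 * d - a * x) / b)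
        = fun x : ℝ => (2 * d) / b - (a / b) * x := by
      funext x; ring
    rw [hrw, intervalIntegral.integral_sub intervalIntegrable_const
          ((intervalIntegral.intervalIntegrable_id).const_mul _),
      intervalIntegral.integral_const, intervalIntegral.integral_const_mul,
      integral_id]
    field_simp [ha.ne', hb.ne']
    have habi : a * b * a⁻¹ * b⁻¹ = 1 := by field_simp [ha.ne', hb.ne']
    linear_combination (8 * d ^ 2) * habi
  have hI2 : ∫⁻ x in Ioc (2 * d / a) s, ENNReal.ofReal ((2 * d - a * x) / b) = 0 := by
    rw [setLIntegral_congr_fun measurableSet_Ioc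
      (fun x hx => ?_)]
    · exact lintegral_zero
    · have : 2 * d < a * x := by rw [← div_lt_iff₀' ha]; exact hx.1
      rw [ENNReal.ofReal_eq_zero]
      apply div_nonpos_of_nonpos_of_nonneg <;> linarith
  have hmain : ((volume.restrict (Icc (0 : ℝ) s)).prod (volume.restrict (Icc (0 : ℝ) s)))
        {p : ℝ × ℝ | a * p.1 + b * p.2 - 2 * d ≤ 0}
      = ENNReal.ofReal (2 * d ^ 2 / (a * b)) := by
    rw [Measure.prod_apply hSm]
    calc ∫⁻ x, (volume.restrict (Icc (0 : ℝ) s))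
            (Prod.mk x ⁻¹' {p : ℝ × ℝ | a * p.1 + b * p.2 - 2 * d ≤ 0})
            ∂(volume.restrict (Icc (0 : ℝ) s))
        = ∫⁻ x in Icc (0 : ℝ) s, ENNReal.ofReal (min ((2 * d - a * x) / b) s) :=
          lintegral_congr fun x => hslice x
      _ = ∫⁻ x in Icc (0 : ℝ) s, ENNReal.ofReal ((2 * d - a * x) / b) := by
          apply setLIntegral_congr_fun measurableSet_Icc
          intro x hx
          beta_reduce
          congr 1
          apply min_eq_left
          rw [div_le_iff₀ hb]
          nlinarith [hx.1, hx.2]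
      _ = ∫⁻ x in Icc (0 : ℝ) (2 * d / a) ∪ Ioc (2 * d / a) s,
            ENNReal.ofReal ((2 * d - a * x) / b) := by
          rw [Icc_union_Ioc_eq_Icc hda hdas]
      _ = ENNReal.ofReal (2 * d ^ 2 / (a * b)) := by
          rw [lintegral_union measurableSet_Ioc
            (disjoint_left.mpr fun x hx hx' => absurd hx.2 (not_le.mpr hx'.1)),
            hI1, hI2, add_zero]
  have hexp : ((uniformOnIcc s).prod (uniformOnIcc s))
        {p : ℝ × ℝ | a * p.1 + b * p.2 - 2 * d ≤ 0}
      = (ENNReal.ofReal s)⁻¹ * ((ENNReal.ofReal s)⁻¹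
          * ((volume.restrict (Icc (0 : ℝ) s)).prod (volume.restrict (Icc (0 : ℝ) s)))
              {p : ℝ × ℝ | a * p.1 + b * p.2 - 2 * d ≤ 0}) := by
    simp only [uniformOnIcc]
    rw [Measure.prod_apply hSm, Measure.prod_apply hSm, lintegral_smul_measure]
    congr 1
    rw [← lintegral_const_mul' _ _ hcne]
    exact lintegral_congr fun x => by simp [smul_eq_mul]
  rw [hPeq, hexp, hmain, ← ENNReal.ofReal_inv_of_pos hs,
    ← ENNReal.ofReal_mul (by positivity), ← ENNReal.ofReal_mul (by positivity)]
  congr 1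
  field_simp

/-- Theorem 3.4: if `2d ≤ s(1 - r₁ + r₂)` and `2d ≤ s(1 + r₁ - r₂)`, then
the aggregate position `R_total = (1-r₁+r₂)X + (1+r₁-r₂)Y - 2d` satisfies
`P(R_total ≤ 0) ≥ P(X + Y - 2d ≤ 0)`, with equality iff `r₁ = r₂`. -/
theorem aggregate_loss_comparison
    {Ω : Type*} [MeasurableSpace Ω] (P : Measure Ω) [IsProbabilityMeasure P]
    (s d : ℝ) (hd : 0 < d)
    (X Y : Ω → ℝ) (hXm : Measurable X) (hYm : Measurable Y)
    (hX : P.map X = uniformOnIcc s) (hY : P.map Y = uniformOnIcc s)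
    (hXY : IndepFun X Y P)
    (r₁ r₂ : ℝ) (hr₁ : r₁ ∈ Icc (0 : ℝ) 1) (hr₂ : r₂ ∈ Icc (0 : ℝ) 1)
    (h1 : 2 * d ≤ s * (1 - r₁ + r₂)) (h2 : 2 * d ≤ s * (1 + r₁ - r₂)) :
    P {ω | (1 - r₁ + r₂) * X ω + (1 + r₁ - r₂) * Y ω - 2 * d ≤ 0}
        ≥ P {ω | X ω + Y ω - 2 * d ≤ 0} ∧
    (P {ω | (1 - r₁ + r₂) * X ω + (1 + r₁ - r₂) * Y ω - 2 * d ≤ 0}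
        = P {ω | X ω + Y ω - 2 * d ≤ 0} ↔ r₁ = r₂) := by
  set a : ℝ := 1 - r₁ + r₂ with ha'
  set b : ℝ := 1 + r₁ - r₂ with hb'
  have hs : 0 < s := by nlinarith [h1, h2, hd]
  have ha : 0 < a := by nlinarith [h1, hd, hs, mul_pos hs (show (0:ℝ) < 1 from one_pos)]
  have hb : 0 < b := by nlinarith [h2, hd, hs]
  have hds : 2 * d ≤ s * 1 := by nlinarith [h1, h2]
  have hP1 : P {ω | a * X ω + b * Y ω - 2 * d ≤ 0}
      = ENNReal.ofReal (2 * d ^ 2 / (a * b * s ^ 2)) :=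
    triangle_prob P s d a b hd hs ha hb h1 h2 X Y hXm hYm hX hY hXY
  have hP2 : P {ω | X ω + Y ω - 2 * d ≤ 0}
      = ENNReal.ofReal (2 * d ^ 2 / (1 * 1 * s ^ 2)) := by
    have := triangle_prob P s d 1 1 hd hs one_pos one_pos hds hds X Y hXm hYm hX hY hXY
    simpa using this
  have hab : a * b = 1 - (r₁ - r₂) ^ 2 := by rw [ha', hb']; ring
  have habpos : 0 < a * b := mul_pos ha hb
  have hineq : 2 * d ^ 2 / (1 * 1 * s ^ 2) ≤ 2 * d ^ 2 / (a * b * s ^ 2) := by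
    apply div_le_div_of_nonneg_left (by positivity) (by positivity)
    nlinarith [sq_nonneg (r₁ - r₂), sq_nonneg s]
  constructor
  · rw [hP1, hP2]
    exact ENNReal.ofReal_le_ofReal hineq
  · rw [hP1, hP2, ENNReal.ofReal_eq_ofReal_iff (by positivity) (by positivity)]
    constructor
    · intro h
      have hs2 : (0:ℝ) < s ^ 2 := by positivity
      have : a * b * s ^ 2 = 1 * 1 * s ^ 2 := by
        have h2d : (0:ℝ) < 2 * d ^ 2 := by positivity
        field_simp at h
        nlinarith [h]
      have hab1 : a * b = 1 := by
        have := mul_right_cancel₀ (ne_of_gt hs2) (by linarith : a * b * s ^ 2 = 1 * s ^ 2)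
        linarith
      have : (r₁ - r₂) ^ 2 = 0 := by rw [hab] at hab1; linarith
      have := pow_eq_zero_iff (n := 2) (by norm_num) |>.mp this
      linarith [sub_eq_zero.mp this]
    · intro h
      subst h
      norm_num [ha', hb']
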